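/- Let g ∈ C²([a,b]) with m = min g'' and M = max g'' on [a,b]. For x_i ∈ [a,b] and positive weights p_i with ∑p_i = 1, set x̄ = ∑ p_i x_i and J = ∑ p_i x_i² − x̄². Then (m/2)[2(x̄ − a)(b − x̄) − J] ≤ g(a) + g(b) − ∑ p_i g(x_i) − g(a + b − x̄) ≤ (M/2)[2(x̄ − a)(b − x̄) − J]. -/

import Mathlib

open Set Finset

/-- pointwise Mercer: for convex h and x ∈ [a,b], h(a+b-x) ≤ h a + h b - h x. -/
private lemma mercer_point {a b : ℝ} (hab : a ≤ b) {h : ℝ → ℝ}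
    (hc : ConvexOn ℝ (Set.Icc a b) h) {x : ℝ} (hx : x ∈ Set.Icc a b) :
    h (a + b - x) ≤ h a + h b - h x := by
  rcases eq_or_lt_of_le hab with rfl | hab'
  · have hxa : x = a := le_antisymm hx.2 hx.1
    subst hxa; simp
  · set l : ℝ := (b - x) / (b - a) with hl
    have hba : (0:ℝ) < b - a := by linarith
    have hl0 : 0 ≤ l := div_nonneg (by linarith [hx.2]) hba.le
    have hl1 : (1 - l) ≥ 0 := by
      have : l ≤ 1 := by
        rw [hl, div_le_one hba]; linarith [hx.1]
      linarith
    have hsum : l + (1 - l) = 1 := by ring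
    have hxrep : l * a + (1 - l) * b = x := by
      have hlm : l * (b - a) = b - x := by rw [hl]; exact div_mul_cancel₀ _ hba.ne'
      linear_combination -hlm
    have hyrep : (1 - l) * a + l * b = a + b - x := by
      have hlm : l * (b - a) = b - x := by rw [hl]; exact div_mul_cancel₀ _ hba.ne'
      linear_combination hlm
    have h1 := hc.2 (left_mem_Icc.2 hab) (right_mem_Icc.2 hab) hl0 hl1 hsum
    have h2 := hc.2 (left_mem_Icc.2 hab) (right_mem_Icc.2 hab) hl1 hl0 (by ring)
    simp only [smul_eq_mul] at h1 h2
    rw [hxrep] at h1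
    rw [hyrep] at h2
    linarith

/-- Jensen–Mercer for convex functions. -/
private lemma mercer {n : ℕ} {a b : ℝ} (hab : a ≤ b) {h : ℝ → ℝ}
    (hc : ConvexOn ℝ (Set.Icc a b) h) {p x : Fin n → ℝ}
    (hp : ∀ i, 0 ≤ p i) (hps : ∑ i, p i = 1) (hx : ∀ i, x i ∈ Set.Icc a b) :
    h (a + b - ∑ i, p i * x i) ≤ h a + h b - ∑ i, p i * h (x i) := by
  have key : a + b - ∑ i, p i * x i = ∑ i, p i • (a + b - x i) := by
    simp only [smul_eq_mul, mul_sub]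
    rw [Finset.sum_sub_distrib, ← Finset.sum_mul, hps]
    ring
  have hmem : ∀ i ∈ Finset.univ, a + b - x i ∈ Set.Icc a b := by
    intro i _
    have := hx i
    constructor <;> [linarith [this.2]; linarith [this.1]]
  have hj := hc.map_sum_le (fun i _ => hp i) hps hmem
  rw [key]
  refine hj.trans ?_
  have : ∀ i ∈ Finset.univ, p i • h (a + b - x i) ≤ p i * (h a + h b - h (x i)) := by
    intro i _
    exact mul_le_mul_of_nonneg_left (mercer_point hab hc (hx i)) (hp i)
  refine (Finset.sum_le_sum this).trans_eq ?_
  simp only [mul_sub, mul_add]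
  rw [Finset.sum_sub_distrib, Finset.sum_add_distrib, ← Finset.sum_mul, ← Finset.sum_mul, hps]
  ring

/-- convexity from second derivative bound below by 0 on Icc. -/
private lemma conv_aux {a b : ℝ} {f f' f'' : ℝ → ℝ}
    (hf' : ∀ t ∈ Set.Icc a b, HasDerivAt f (f' t) t)
    (hf'' : ∀ t ∈ Set.Icc a b, HasDerivAt f' (f'' t) t)
    (h0 : ∀ t ∈ Set.Icc a b, 0 ≤ f'' t) :
    ConvexOn ℝ (Set.Icc a b) f := by
  apply convexOn_of_hasDerivWithinAt2_nonneg (convex_Icc a b)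
  · exact fun t ht => ((hf' t ht).continuousAt).continuousWithinAt
  · exact fun t ht => ((hf' t (interior_subset ht)).hasDerivWithinAt)
  · exact fun t ht => ((hf'' t (interior_subset ht)).hasDerivWithinAt)
  · exact fun t ht => h0 t (interior_subset ht)

theorem jensen_mercer_nonconvex
    (n : ℕ) (a b m M : ℝ) (hab : a ≤ b)
    (g g' g'' : ℝ → ℝ)
    (hg' : ∀ t ∈ Set.Icc a b, HasDerivAt g (g' t) t)
    (hg'' : ∀ t ∈ Set.Icc a b, HasDerivAt g' (g'' t) t)
    (hgc : ContinuousOn g'' (Set.Icc a b))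
    (hm : ∀ t ∈ Set.Icc a b, m ≤ g'' t) (hm' : ∃ t ∈ Set.Icc a b, g'' t = m)
    (hM : ∀ t ∈ Set.Icc a b, g'' t ≤ M) (hM' : ∃ t ∈ Set.Icc a b, g'' t = M)
    (p x : Fin n → ℝ)
    (hp : ∀ i, 0 < p i) (hps : ∑ i, p i = 1)
    (hx : ∀ i, x i ∈ Set.Icc a b) :
    (m / 2) * (2 * ((∑ i, p i * x i) - a) * (b - ∑ i, p i * x i) -
        (∑ i, p i * (x i) ^ 2 - (∑ i, p i * x i) ^ 2)) ≤
      g a + g b - ∑ i, p i * g (x i) - g (a + b - ∑ i, p i * x i) ∧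
    g a + g b - ∑ i, p i * g (x i) - g (a + b - ∑ i, p i * x i) ≤
      (M / 2) * (2 * ((∑ i, p i * x i) - a) * (b - ∑ i, p i * x i) -
        (∑ i, p i * (x i) ^ 2 - (∑ i, p i * x i) ^ 2)) := by
  set xb := ∑ i, p i * x i with hxb
  -- h₁ = g - (m/2) t², convex; h₂ = (M/2) t² - g, convex
  have hq : ∀ (c : ℝ) (t : ℝ), HasDerivAt (fun s => c * s ^ 2) (2 * c * t) t := by
    intro c t
    have := ((hasDerivAt_pow 2 t).const_mul c)
    simpa [mul_comm, mul_assoc, mul_left_comm] using this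
  have hconv1 : ConvexOn ℝ (Set.Icc a b) (fun t => g t - m / 2 * t ^ 2) := by
    apply conv_aux (f' := fun t => g' t - m * t) (f'' := fun t => g'' t - m)
    · intro t ht
      have := (hg' t ht).sub (hq (m / 2) t)
      exact this.congr_deriv (by ring)
    · intro t ht
      have h2 := (hg'' t ht).sub ((hasDerivAt_id t).const_mul m)
      simpa [Pi.sub_def] using h2
    · exact fun t ht => by linarith [hm t ht]
  have hconv2 : ConvexOn ℝ (Set.Icc a b) (fun t => M / 2 * t ^ 2 - g t) := by
    apply conv_aux (f' := fun t => M * t - g' t) (f'' := fun t => M - g'' t)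
    · intro t ht
      have := (hq (M / 2) t).sub (hg' t ht)
      exact this.congr_deriv (by ring)
    · intro t ht
      have h2 := ((hasDerivAt_id t).const_mul M).sub (hg'' t ht)
      simpa [Pi.sub_def] using h2
    · exact fun t ht => by linarith [hM t ht]
  have hp' : ∀ i, 0 ≤ p i := fun i => (hp i).le
  have hme1 := mercer hab hconv1 hp' hps hx
  have hme2 := mercer hab hconv2 hp' hps hx
  have hsplit1 : ∑ i, p i * (g (x i) - m / 2 * x i ^ 2)
      = ∑ i, p i * g (x i) - m / 2 * ∑ i, p i * x i ^ 2 := by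
    simp only [mul_sub]
    rw [Finset.sum_sub_distrib, Finset.mul_sum]
    congr 1
    exact Finset.sum_congr rfl fun i _ => by ring
  have hsplit2 : ∑ i, p i * (M / 2 * x i ^ 2 - g (x i))
      = M / 2 * ∑ i, p i * x i ^ 2 - ∑ i, p i * g (x i) := by
    simp only [mul_sub]
    rw [Finset.sum_sub_distrib, Finset.mul_sum]
    congr 1
    exact Finset.sum_congr rfl fun i _ => by ring
  rw [hsplit1] at hme1
  rw [hsplit2] at hme2
  constructor
  · nlinarith [hme1]
  · nlinarith [hme2]
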